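/- Let I be a countable set (|I| ≤ ℵ₀), let τ : ℝ^I → ℝ and let p ∈ [1, ∞). Then τ preserves p-integrability (over every measure space) if, and only if, τ preserves p-integrability over (ℝ, B_ℝ, Leb), where B_ℝ is the Borel σ-algebra on ℝ and Leb is the restriction of the Lebesgue measure to B_ℝ. -/

import Mathlib

open MeasureTheory

universe u v

/-- `f ∈ L^p(μ)`: `f` is measurable and `∫ |f|^p dμ < ∞`. -/
def MemLpReal {Ω : Type u} [MeasurableSpace Ω] (μ : Measure Ω) (p : ℝ) (f : Ω → ℝ) : Prop :=
  Measurable f ∧ ∫⁻ x, ENNReal.ofReal (|f x| ^ p) ∂μ < ⊤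

/-- `τ` preserves `p`-integrability over the measure space `(Ω, μ)`. -/
def PreservesLpOver {I : Type v} (τ : (I → ℝ) → ℝ) (p : ℝ)
    (Ω : Type u) [MeasurableSpace Ω] (μ : Measure Ω) : Prop :=
  ∀ f : I → Ω → ℝ, (∀ i, MemLpReal μ p (f i)) →
    MemLpReal μ p fun x => τ fun i => f i x

section Aux

open Set Function Filter


noncomputable def cTerm (b : ℕ → Bool) (n : ℕ) : ℝ := if b n then (3:ℝ)⁻¹ ^ (n+1) else 0

lemma cTerm_nonneg (b : ℕ → Bool) (n : ℕ) : 0 ≤ cTerm b n := by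
  unfold cTerm; split <;> positivity

lemma cTerm_le (b : ℕ → Bool) (n : ℕ) : cTerm b n ≤ (3:ℝ)⁻¹ ^ (n+1) := by
  unfold cTerm; split
  · exact le_rfl
  · positivity

lemma summable_geom_shift (m : ℕ) : Summable (fun k : ℕ => (3:ℝ)⁻¹ ^ (k + m + 1)) := by
  have := (summable_geometric_of_lt_one (by norm_num) (by norm_num : (3:ℝ)⁻¹ < 1)).mul_right ((3:ℝ)⁻¹ ^ (m+1))
  apply this.congr
  intro k; ring

lemma tsum_geom_shift (m : ℕ) : ∑' k : ℕ, (3:ℝ)⁻¹ ^ (k + m + 1) = (3:ℝ)⁻¹ ^ m / 2 := by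
  have h1 : ∀ k : ℕ, (3:ℝ)⁻¹ ^ (k + m + 1) = (3:ℝ)⁻¹ ^ k * (3:ℝ)⁻¹ ^ (m+1) := by
    intro k; ring
  rw [tsum_congr h1, tsum_mul_right, tsum_geometric_of_lt_one (by norm_num) (by norm_num)]
  ring

lemma cTerm_summable (b : ℕ → Bool) : Summable (cTerm b) := by
  refine Summable.of_nonneg_of_le (cTerm_nonneg b) (cTerm_le b) ?_
  simpa using summable_geom_shift 0

noncomputable def cFun (b : ℕ → Bool) : ℝ := ∑' n, cTerm b n

lemma cFun_tail_nonneg (b : ℕ → Bool) (m : ℕ) : 0 ≤ ∑' k : ℕ, cTerm b (k + m) :=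
  tsum_nonneg fun k => cTerm_nonneg b _

lemma cFun_tail_le (b : ℕ → Bool) (m : ℕ) : ∑' k : ℕ, cTerm b (k + m) ≤ (3:ℝ)⁻¹ ^ m / 2 := by
  rw [← tsum_geom_shift m]
  exact Summable.tsum_le_tsum (fun k => cTerm_le b _) ((cTerm_summable b).comp_injective (add_left_injective m)) (summable_geom_shift m)

lemma cFun_split (b : ℕ → Bool) (m : ℕ) :
    cFun b = (∑ n ∈ Finset.range m, cTerm b n) + ∑' k : ℕ, cTerm b (k + m) :=
  (Summable.sum_add_tsum_nat_add m (cTerm_summable b)).symm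

lemma cFun_lt {b b' : ℕ → Bool} (m : ℕ) (hlow : ∀ k < m, b k = b' k)
    (hb : b m = false) (hb' : b' m = true) : cFun b < cFun b' := by
  have hsum : ∑ n ∈ Finset.range (m+1), cTerm b n + (3:ℝ)⁻¹ ^ (m+1)
      = ∑ n ∈ Finset.range (m+1), cTerm b' n := by
    rw [Finset.sum_range_succ, Finset.sum_range_succ]
    have : ∑ n ∈ Finset.range m, cTerm b n = ∑ n ∈ Finset.range m, cTerm b' n :=
      Finset.sum_congr rfl fun n hn => by
        unfold cTerm; rw [hlow n (Finset.mem_range.mp hn)]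
    rw [this]
    unfold cTerm; rw [hb, hb']; simp
  have h1 := cFun_split b (m+1)
  have h2 := cFun_split b' (m+1)
  have ht1 := cFun_tail_le b (m+1)
  have ht2 := cFun_tail_nonneg b' (m+1)
  have hpos : (0:ℝ) < (3:ℝ)⁻¹ ^ (m+1) := by positivity
  nlinarith [ht1, ht2]

lemma cFun_injective : Injective cFun := by
  intro b b' h
  by_contra hne
  have hex : ∃ n, b n ≠ b' n := Function.ne_iff.mp hne
  classical
  set m := Nat.find hex with hm
  have hdiff : b m ≠ b' m := Nat.find_spec hex
  have hlow : ∀ k < m, b k = b' k := fun k hk => by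
    by_contra hc; exact Nat.find_min hex hk hc
  cases hbm : b m <;> cases hbm' : b' m
  · exact hdiff (hbm.trans hbm'.symm)
  · exact absurd h (ne_of_lt (cFun_lt m hlow hbm hbm'))
  · exact absurd h.symm (ne_of_lt (cFun_lt m (fun k hk => (hlow k hk).symm) hbm' hbm))
  · exact hdiff (hbm.trans hbm'.symm)

lemma cFun_measurable : Measurable cFun := by
  apply measurable_of_tendsto_metrizable
    (f := fun m (b : ℕ → Bool) => ∑ n ∈ Finset.range m, cTerm b n)
  · intro m
    apply Finset.measurable_sum
    intro n _
    have : Measurable fun v : Bool => if v then (3:ℝ)⁻¹ ^ (n+1) else 0 :=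
      measurable_of_countable _
    exact this.comp (measurable_pi_apply n)
  · rw [tendsto_pi_nhds]
    intro b
    exact (cTerm_summable b).hasSum.tendsto_sum_nat

lemma cFun_range_null : volume (range cFun) = 0 := by
  have key : ∀ m : ℕ, volume (range cFun) ≤ ENNReal.ofReal ((2/3:ℝ) ^ m) := by
    intro m
    set P : (Fin m → Bool) → ℝ := fun s => ∑ k : Fin m, (if s k then (3:ℝ)⁻¹ ^ ((k:ℕ)+1) else 0) with hP
    have hsub : range cFun ⊆ ⋃ s : Fin m → Bool, Icc (P s) (P s + (3:ℝ)⁻¹ ^ m / 2) := by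
      rintro - ⟨b, rfl⟩
      refine mem_iUnion.mpr ⟨fun k => b k, ?_⟩
      have hsplit := cFun_split b m
      have : ∑ n ∈ Finset.range m, cTerm b n = P (fun k => b k) := by
        rw [hP, Finset.sum_range]
        rfl
      constructor
      · rw [hsplit, this]; nlinarith [cFun_tail_nonneg b m]
      · rw [hsplit, this]; nlinarith [cFun_tail_le b m]
    calc volume (range cFun) ≤ volume (⋃ s : Fin m → Bool, Icc (P s) (P s + (3:ℝ)⁻¹ ^ m / 2)) :=
          measure_mono hsub
      _ ≤ ∑' s : Fin m → Bool, volume (Icc (P s) (P s + (3:ℝ)⁻¹ ^ m / 2)) := measure_iUnion_le _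
      _ = ∑' _ : Fin m → Bool, ENNReal.ofReal ((3:ℝ)⁻¹ ^ m / 2) := by
          congr 1; funext s; rw [Real.volume_Icc]; ring_nf
      _ = (Fintype.card (Fin m → Bool)) * ENNReal.ofReal ((3:ℝ)⁻¹ ^ m / 2) := by
          rw [tsum_fintype]; simp [Finset.sum_const, nsmul_eq_mul]
      _ ≤ ENNReal.ofReal ((2/3:ℝ) ^ m) := by
          rw [Fintype.card_fun]
          simp only [Fintype.card_fin, Fintype.card_bool]
          rw [show ((2^m : ℕ) : ENNReal) = ENNReal.ofReal ((2:ℝ)^m) by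
            rw [ENNReal.ofReal_pow (by norm_num)]; simp [ENNReal.ofReal_ofNat]]
          rw [← ENNReal.ofReal_mul (by positivity)]
          apply ENNReal.ofReal_le_ofReal
          rw [div_pow]
          rw [show (2:ℝ)^m * ((3:ℝ)⁻¹^m / 2) = (2:ℝ)^m / (3:ℝ)^m / 2 by
            rw [inv_pow]; ring]
          have : (0:ℝ) < (2:ℝ)^m / (3:ℝ)^m := by positivity
          linarith
  have htend : Tendsto (fun m : ℕ => ENNReal.ofReal ((2/3:ℝ) ^ m)) atTop (nhds 0) := by
    have := tendsto_pow_atTop_nhds_zero_of_lt_one (by norm_num : (0:ℝ) ≤ 2/3) (by norm_num)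
    simpa using ENNReal.tendsto_ofReal this
  exact le_antisymm (ge_of_tendsto' htend key) (zero_le)


lemma memlp_integrand_meas {Ω : Type u} [MeasurableSpace Ω] {f : Ω → ℝ} (hf : Measurable f)
    {p : ℝ} (hp : 0 ≤ p) : Measurable fun x => ENNReal.ofReal (|f x| ^ p) :=
  ((Real.continuous_rpow_const hp).measurable.comp hf.abs).ennreal_ofReal

lemma tau_zero {I : Type v} (τ : (I → ℝ) → ℝ) (p : ℝ) (hp : 1 ≤ p)
    (H : PreservesLpOver τ p ℝ volume) : τ (fun _ => 0) = 0 := by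
  have hp0 : p ≠ 0 := by linarith
  have h := H (fun _ _ => 0) (fun i => ⟨measurable_const, by
    simp [Real.zero_rpow hp0]⟩)
  obtain ⟨-, hint⟩ := h
  by_contra hne
  have habs : 0 < |τ (fun _ => 0)| := abs_pos.mpr hne
  have hpow : 0 < |τ (fun _ => 0)| ^ p := Real.rpow_pos_of_pos habs p
  rw [lintegral_const, Real.volume_univ, ENNReal.mul_top] at hint
  · exact (lt_irrefl _ hint)
  · simpa [ENNReal.ofReal_eq_zero] using not_le.mpr hpow

lemma tau_measurable {I : Type v} [Countable I] [Nonempty I] (τ : (I → ℝ) → ℝ) (p : ℝ)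
    (hp : 1 ≤ p) (H : PreservesLpOver τ p ℝ volume) : Measurable τ := by
  have hp0 : p ≠ 0 := by linarith
  have hIu : ¬ Countable (I → ℝ) := by
    intro hcnt
    have hinj : Injective (fun (r : ℝ) (_ : I) => r) := by
      intro a b hab
      exact congrFun hab (Classical.arbitrary I)
    have : Countable ℝ := hinj.countable
    exact (not_countable (α := ℝ)) this
  let χ : (I → ℝ) ≃ᵐ (ℕ → Bool) := PolishSpace.measurableEquivNatBoolOfNotCountable hIu
  let e : (I → ℝ) → ℝ := cFun ∘ χ
  have he_meas : Measurable e := cFun_measurable.comp χ.measurable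
  have he_inj : Injective e := cFun_injective.comp χ.injective
  have hemb : MeasurableEmbedding e := he_meas.measurableEmbedding he_inj
  have hrange_eq : range e = range cFun := by
    rw [Set.range_comp, χ.surjective.range_eq, Set.image_univ]
  have hrange_meas : MeasurableSet (range e) := by
    have := hemb.measurableSet_image' MeasurableSet.univ
    rwa [Set.image_univ] at this
  have hnull : volume (range e) = 0 := by rw [hrange_eq]; exact cFun_range_null
  obtain ⟨F', hF'meas, hF'comp⟩ :=
    hemb.exists_measurable_extend (measurable_id (α := I → ℝ)) (fun _ => ⟨fun _ => 0⟩)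
  set fam : I → ℝ → ℝ := fun i t => (range e).indicator (fun s => F' s i) t with hfam
  have hfam_meas : ∀ i, Measurable (fam i) := fun i =>
    ((measurable_pi_apply i).comp hF'meas).indicator hrange_meas
  have hfam_lp : ∀ i, MemLpReal volume p (fam i) := by
    intro i
    refine ⟨hfam_meas i, ?_⟩
    have h0 : (fun t => ENNReal.ofReal (|fam i t| ^ p)) =ᵐ[volume] 0 := by
      rw [Filter.EventuallyEq, ae_iff]
      apply measure_mono_null _ hnull
      intro t ht
      simp only [mem_setOf_eq] at ht
      by_contra htr
      apply ht
      rw [hfam]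
      simp only [indicator_of_notMem htr, abs_zero, Real.zero_rpow hp0,
        ENNReal.ofReal_zero, Pi.zero_apply]
    rw [lintegral_congr_ae h0]
    simp
  obtain ⟨hGmeas, -⟩ := H fam hfam_lp
  have htau : τ = (fun t => τ fun i => fam i t) ∘ e := by
    funext y
    simp only [comp_apply]
    congr 1
    funext i
    rw [hfam]
    simp only [indicator_of_mem (mem_range_self y)]
    have : F' (e y) = y := congrFun hF'comp y
    rw [this]
  rw [htau]
  exact hGmeas.comp he_meas

lemma measurable_tsum_real {α : Type*} [MeasurableSpace α] {g : ℕ → α → ℝ}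
    (hg : ∀ n, Measurable (g n)) (hs : ∀ t, Summable fun n => g n t) :
    Measurable fun t => ∑' n, g n t := by
  apply measurable_of_tendsto_metrizable
    (f := fun m t => ∑ n ∈ Finset.range m, g n t)
  · exact fun m => Finset.measurable_sum _ fun n _ => hg n
  · rw [tendsto_pi_nhds]
    exact fun t => (hs t).hasSum.tendsto_sum_nat

lemma exists_bound {I : Type v} [Countable I] [Nonempty I] (τ : (I → ℝ) → ℝ) (p : ℝ)
    (hp : 1 ≤ p) (H : PreservesLpOver τ p ℝ volume) :
    ∃ (J : Finset I) (C : ℝ), 0 ≤ C ∧ ∀ x : I → ℝ, |τ x| ≤ C * ∑ j ∈ J, |x j| := by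
  classical
  have hp0 : (0:ℝ) ≤ p := by linarith
  have hpne : p ≠ 0 := by linarith
  obtain ⟨en, hen⟩ := exists_surjective_nat I
  by_contra hcon
  push_neg at hcon
  have hx : ∀ n : ℕ, ∃ x : I → ℝ,
      (2:ℝ)^n * ∑ j ∈ (Finset.range n).image en, |x j| < |τ x| := fun n =>
    hcon ((Finset.range n).image en) ((2:ℝ)^n) (by positivity)
  choose x hxlt using hx
  have hτpos : ∀ n, 0 < |τ (x n)| := by
    intro n
    refine lt_of_le_of_lt ?_ (hxlt n)
    have : (0:ℝ) ≤ ∑ j ∈ (Finset.range n).image en, |x n j| :=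
      Finset.sum_nonneg fun j _ => abs_nonneg _
    positivity
  set ε : ℕ → ℝ := fun n => (|τ (x n)| ^ p)⁻¹ with hε
  have hτppos : ∀ n, (0:ℝ) < |τ (x n)| ^ p := fun n => Real.rpow_pos_of_pos (hτpos n) p
  have hεpos : ∀ n, 0 < ε n := fun n => inv_pos.mpr (hτppos n)
  set a : ℕ → ℝ := fun n => ∑ m ∈ Finset.range n, ε m with ha
  have haS : ∀ n, a (n+1) = a n + ε n := fun n => Finset.sum_range_succ ε n
  have hamono : Monotone a := by
    apply monotone_nat_of_le_succ
    intro n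
    rw [haS n]
    linarith [hεpos n]
  set E : ℕ → Set ℝ := fun n => Ico (a n) (a (n+1)) with hE
  have hEmeas : ∀ n, MeasurableSet (E n) := fun n => measurableSet_Ico
  have hvol : ∀ n, volume (E n) = ENNReal.ofReal (ε n) := by
    intro n
    rw [hE]
    simp only [Real.volume_Ico, haS]
    ring_nf
  have hdisj0 : ∀ m n, m < n → Disjoint (E m) (E n) := by
    intro m n hlt
    rw [Set.disjoint_left]
    intro t htm htn
    have h1 : t < a (m+1) := htm.2
    have h2 : a n ≤ t := htn.1
    have h3 : a (m+1) ≤ a n := hamono hlt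
    linarith
  have hdisj : Pairwise (Disjoint on E) := by
    intro m n hmn
    rcases lt_or_gt_of_ne hmn with h | h
    · exact hdisj0 m n h
    · exact (hdisj0 n m h).symm
  have huniq : ∀ {n m : ℕ} {t : ℝ}, t ∈ E n → t ∈ E m → n = m := by
    intro n m t hn hm
    by_contra hne
    exact Set.disjoint_left.mp (hdisj hne) hn hm
  set f : I → ℝ → ℝ := fun i t => ∑' n, (E n).indicator (fun _ => x n i) t with hf
  have hval : ∀ n t, t ∈ E n → ∀ i, f i t = x n i := by
    intro n t ht i
    rw [hf]
    simp only
    rw [tsum_eq_single n (fun m hm => indicator_of_notMem (fun htm => hm (huniq htm ht)) _)]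
    exact indicator_of_mem ht _
  have hval0 : ∀ t, (∀ n, t ∉ E n) → ∀ i, f i t = 0 := by
    intro t ht i
    rw [hf]
    simp only
    rw [tsum_congr (fun n => indicator_of_notMem (ht n) (fun _ => x n i)), tsum_zero]
  have hsummable : ∀ i t, Summable fun n => (E n).indicator (fun _ => x n i) t := by
    intro i t
    by_cases h : ∃ n, t ∈ E n
    · obtain ⟨n, hn⟩ := h
      apply summable_of_ne_finset_zero (s := {n})
      intro m hm
      apply indicator_of_notMem
      intro htm
      exact hm (by simp [huniq htm hn])
    · push_neg at h
      apply summable_of_ne_finset_zero (s := ∅)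
      intro m _
      exact indicator_of_notMem (h m) _
  have hfmeas : ∀ i, Measurable (f i) := fun i =>
    measurable_tsum_real (fun n => measurable_const.indicator (hEmeas n)) (hsummable i)
  have hkey : ∀ i, (fun t => ENNReal.ofReal (|f i t| ^ p)) =
      fun t => ∑' n, (E n).indicator (fun _ => ENNReal.ofReal (|x n i| ^ p)) t := by
    intro i
    funext t
    by_cases h : ∃ n, t ∈ E n
    · obtain ⟨n, hn⟩ := h
      rw [hval n t hn i,
        tsum_eq_single n (fun m hm => indicator_of_notMem (fun htm => hm (huniq htm hn)) _),
        indicator_of_mem hn]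
    · push_neg at h
      rw [hval0 t h i,
        tsum_congr (fun n => indicator_of_notMem (h n) (fun _ => ENNReal.ofReal (|x n i| ^ p))),
        tsum_zero]
      simp [Real.zero_rpow hpne]
  have hterm : ∀ i n, ∫⁻ t, (E n).indicator (fun _ => ENNReal.ofReal (|x n i| ^ p)) t ∂volume
      = ENNReal.ofReal (|x n i| ^ p * ε n) := by
    intro i n
    rw [lintegral_indicator (hEmeas n), setLIntegral_const, hvol n,
      ← ENNReal.ofReal_mul (by positivity)]
  have hLp : ∀ i, MemLpReal volume p (f i) := by
    intro i
    refine ⟨hfmeas i, ?_⟩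
    rw [hkey i, lintegral_tsum (fun n => (measurable_const.indicator (hEmeas n)).aemeasurable),
      tsum_congr (hterm i)]
    obtain ⟨k, hk⟩ := hen i
    -- bound for n > k
    have hbound : ∀ n, k < n → |x n i| ^ p * ε n ≤ (2:ℝ)⁻¹ ^ n := by
      intro n hkn
      have hiJ : i ∈ (Finset.range n).image en :=
        Finset.mem_image.mpr ⟨k, Finset.mem_range.mpr hkn, hk⟩
      have h1 : |x n i| ≤ ∑ j ∈ (Finset.range n).image en, |x n j| :=
        Finset.single_le_sum (f := fun j => |x n j|) (fun j _ => abs_nonneg _) hiJ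
      have h2 := hxlt n
      have h3 : |x n i| ≤ |τ (x n)| / 2^n := by
        rw [le_div_iff₀ (by positivity : (0:ℝ) < 2^n)]
        nlinarith [pow_pos (by norm_num : (0:ℝ) < 2) n]
      have h4 : |x n i| ^ p ≤ (|τ (x n)| / 2^n) ^ p :=
        Real.rpow_le_rpow (abs_nonneg _) h3 hp0
      have h5 : (|τ (x n)| / 2^n) ^ p = |τ (x n)|^p / ((2:ℝ)^n)^p :=
        Real.div_rpow (abs_nonneg _) (by positivity) p
      have h6 : |x n i| ^ p * ε n ≤ (|τ (x n)|^p / ((2:ℝ)^n)^p) * ε n := by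
        apply mul_le_mul_of_nonneg_right _ (hεpos n).le
        rw [← h5]; exact h4
      have h7 : (|τ (x n)|^p / ((2:ℝ)^n)^p) * ε n = (((2:ℝ)^n)^p)⁻¹ := by
        rw [hε]
        simp only
        field_simp
        exact div_self (ne_of_gt (hτppos n))
      have h8 : (2:ℝ)^n ≤ ((2:ℝ)^n) ^ p := by
        nth_rewrite 1 [← Real.rpow_one ((2:ℝ)^n)]
        exact Real.rpow_le_rpow_of_exponent_le (one_le_pow₀ (by norm_num)) hp
      have h9 : (((2:ℝ)^n)^p)⁻¹ ≤ ((2:ℝ)^n)⁻¹ := by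
        apply inv_anti₀ (by positivity) h8
      calc |x n i| ^ p * ε n ≤ (((2:ℝ)^n)^p)⁻¹ := by rw [← h7]; exact h6
        _ ≤ ((2:ℝ)^n)⁻¹ := h9
        _ = (2:ℝ)⁻¹ ^ n := by rw [inv_pow]
    -- global majorant
    set M : ℝ := 1 + ∑ m ∈ Finset.range (k+1), (|x m i| ^ p * ε m) * 2^m with hM
    have hMterms : ∀ m ∈ Finset.range (k+1), (0:ℝ) ≤ (|x m i| ^ p * ε m) * 2^m := by
      intro m _
      have := (hεpos m).le
      positivity
    have hM1 : (1:ℝ) ≤ M := by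
      rw [hM]
      have := Finset.sum_nonneg hMterms
      linarith
    have hMbound : ∀ n, |x n i| ^ p * ε n ≤ M * (2:ℝ)⁻¹ ^ n := by
      intro n
      by_cases hn : n ≤ k
      · have hsingle : (|x n i| ^ p * ε n) * 2^n ≤
            ∑ m ∈ Finset.range (k+1), (|x m i| ^ p * ε m) * 2^m :=
          Finset.single_le_sum hMterms (Finset.mem_range.mpr (by omega))
        have h2n : (0:ℝ) < 2^n := by positivity
        rw [show M * (2:ℝ)⁻¹ ^ n = M / 2^n by rw [inv_pow]; ring]
        rw [le_div_iff₀ h2n]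
        calc (|x n i| ^ p * ε n) * 2^n
            ≤ ∑ m ∈ Finset.range (k+1), (|x m i| ^ p * ε m) * 2^m := hsingle
          _ ≤ M := by rw [hM]; linarith
      · calc |x n i| ^ p * ε n ≤ (2:ℝ)⁻¹ ^ n := hbound n (by omega)
          _ ≤ M * (2:ℝ)⁻¹ ^ n := by
              nth_rewrite 1 [← one_mul ((2:ℝ)⁻¹ ^ n)]
              apply mul_le_mul_of_nonneg_right hM1 (by positivity)
    calc ∑' n, ENNReal.ofReal (|x n i| ^ p * ε n)
        ≤ ∑' n, ENNReal.ofReal M * (ENNReal.ofReal 2⁻¹) ^ n := by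
          apply ENNReal.tsum_le_tsum
          intro n
          calc ENNReal.ofReal (|x n i| ^ p * ε n) ≤ ENNReal.ofReal (M * (2:ℝ)⁻¹ ^ n) :=
                ENNReal.ofReal_le_ofReal (hMbound n)
            _ = ENNReal.ofReal M * (ENNReal.ofReal 2⁻¹) ^ n := by
                rw [ENNReal.ofReal_mul (by linarith), ENNReal.ofReal_pow (by norm_num)]
      _ = ENNReal.ofReal M * (1 - ENNReal.ofReal 2⁻¹)⁻¹ := by
          rw [ENNReal.tsum_mul_left, ENNReal.tsum_geometric]
      _ < ⊤ := by
          apply ENNReal.mul_lt_top ENNReal.ofReal_lt_top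
          rw [ENNReal.inv_lt_top]
          rw [tsub_pos_iff_lt]
          exact ENNReal.ofReal_lt_one.mpr (by norm_num)
  -- apply H and derive contradiction
  obtain ⟨hGmeas, hGint⟩ := H f hLp
  have hcontra : (⊤ : ENNReal) ≤ ∫⁻ t, ENNReal.ofReal (|τ (fun i => f i t)| ^ p) ∂volume := by
    have hle : ∫⁻ t in ⋃ n, E n, ENNReal.ofReal (|τ (fun i => f i t)| ^ p) ∂volume
        ≤ ∫⁻ t, ENNReal.ofReal (|τ (fun i => f i t)| ^ p) ∂volume :=
      lintegral_mono' Measure.restrict_le_self le_rfl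
    refine le_trans ?_ hle
    rw [lintegral_iUnion hEmeas hdisj]
    have hpiece : ∀ n, ∫⁻ t in E n, ENNReal.ofReal (|τ (fun i => f i t)| ^ p) ∂volume
        = 1 := by
      intro n
      have hcongr : ∀ t ∈ E n,
          ENNReal.ofReal (|τ (fun i => f i t)| ^ p) = ENNReal.ofReal (|τ (x n)| ^ p) := by
        intro t ht
        rw [show (fun i => f i t) = x n from funext (hval n t ht)]
      rw [setLIntegral_congr_fun (hEmeas n) hcongr,
        setLIntegral_const, hvol n, ← ENNReal.ofReal_mul (by positivity)]
      rw [hε]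
      simp only
      rw [mul_inv_cancel₀ (ne_of_gt (hτppos n))]
      exact ENNReal.ofReal_one
    rw [tsum_congr hpiece]
    exact le_of_eq (ENNReal.tsum_const_eq_top_of_ne_zero one_ne_zero).symm
  rw [top_le_iff] at hcontra
  rw [hcontra] at hGint
  exact lt_irrefl _ hGint

end Aux

open Set Function Filter in
theorem preserves_p_integrability_iff_over_lebesgue {I : Type v} [Countable I]
    (τ : (I → ℝ) → ℝ) (p : ℝ) (hp : 1 ≤ p) :
    (∀ (Ω : Type u) [MeasurableSpace Ω] (μ : Measure Ω), PreservesLpOver τ p Ω μ) ↔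
      PreservesLpOver τ p ℝ volume := by
  have hp0 : (0:ℝ) ≤ p := by linarith
  have hpne : p ≠ 0 := by linarith
  constructor
  · -- forward: use ULift ℝ
    intro Hall f hf
    have hup : Measurable (ULift.up : ℝ → ULift.{u} ℝ) := measurable_up
    have hdown : Measurable (ULift.down : ULift.{u} ℝ → ℝ) := measurable_down
    set ν : Measure (ULift.{u} ℝ) := Measure.map ULift.up volume with hν
    have Hlift := Hall (ULift.{u} ℝ) ν
    set g : I → ULift.{u} ℝ → ℝ := fun i y => f i y.down with hg
    have hglp : ∀ i, MemLpReal ν p (g i) := by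
      intro i
      refine ⟨(hf i).1.comp hdown, ?_⟩
      have heq := lintegral_map (μ := volume)
        (memlp_integrand_meas ((hf i).1.comp hdown) hp0) hup
      exact heq.trans_lt ((hf i).2)
    obtain ⟨hm, hint⟩ := Hlift g hglp
    constructor
    · exact hm.comp hup
    · have heq2 := lintegral_map (μ := volume) (memlp_integrand_meas hm hp0) hup
      exact heq2.symm.trans_lt hint
  · -- backward
    intro H Ω mΩ μ f hf
    by_cases hI : Nonempty I
    · obtain ⟨J, C, hC0, hbound⟩ := exists_bound τ p hp H
      have hτm : Measurable τ := tau_measurable τ p hp H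
      have hFm : Measurable fun x (i : I) => f i x :=
        measurable_pi_lambda _ fun i => (hf i).1
      refine ⟨hτm.comp hFm, ?_⟩
      by_cases hJ : J.Nonempty
      · set k : ℝ := (J.card : ℝ) with hk
        have hk0 : 0 ≤ k := by positivity
        have hpoint : ∀ x : Ω, ENNReal.ofReal (|τ fun i => f i x| ^ p) ≤
            ENNReal.ofReal ((C * k) ^ p) * ∑ j ∈ J, ENNReal.ofReal (|f j x| ^ p) := by
          intro x
          obtain ⟨j0, hj0J, hj0⟩ := Finset.exists_max_image J (fun j => |f j x|) hJ
          have hsum_le : ∑ j ∈ J, |f j x| ≤ k * |f j0 x| := by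
            have := Finset.sum_le_card_nsmul J (fun j => |f j x|) (|f j0 x|) hj0
            rwa [nsmul_eq_mul] at this
          have h1 : |τ fun i => f i x| ≤ C * ∑ j ∈ J, |f j x| := hbound _
          have h2 : C * ∑ j ∈ J, |f j x| ≤ (C * k) * |f j0 x| := by
            calc C * ∑ j ∈ J, |f j x| ≤ C * (k * |f j0 x|) :=
                  mul_le_mul_of_nonneg_left hsum_le hC0
              _ = (C * k) * |f j0 x| := by ring
          have h3 : |τ fun i => f i x| ^ p ≤ ((C * k) * |f j0 x|) ^ p :=
            Real.rpow_le_rpow (abs_nonneg _) (h1.trans h2) hp0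
          have h4 : ((C * k) * |f j0 x|) ^ p = (C * k) ^ p * |f j0 x| ^ p :=
            Real.mul_rpow (by positivity) (abs_nonneg _)
          have h5 : |f j0 x| ^ p ≤ ∑ j ∈ J, |f j x| ^ p :=
            Finset.single_le_sum (f := fun j => |f j x| ^ p)
              (fun j _ => Real.rpow_nonneg (abs_nonneg _) p) hj0J
          calc ENNReal.ofReal (|τ fun i => f i x| ^ p)
              ≤ ENNReal.ofReal ((C * k) ^ p * ∑ j ∈ J, |f j x| ^ p) := by
                apply ENNReal.ofReal_le_ofReal
                calc |τ fun i => f i x| ^ p ≤ (C * k) ^ p * |f j0 x| ^ p := by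
                      rw [← h4]; exact h3
                  _ ≤ (C * k) ^ p * ∑ j ∈ J, |f j x| ^ p :=
                      mul_le_mul_of_nonneg_left h5 (Real.rpow_nonneg (by positivity) p)
            _ = ENNReal.ofReal ((C * k) ^ p) * ∑ j ∈ J, ENNReal.ofReal (|f j x| ^ p) := by
                rw [ENNReal.ofReal_mul (Real.rpow_nonneg (by positivity) p),
                  ENNReal.ofReal_sum_of_nonneg (fun j _ => Real.rpow_nonneg (abs_nonneg _) p)]
        calc ∫⁻ x, ENNReal.ofReal (|τ fun i => f i x| ^ p) ∂μ
            ≤ ∫⁻ x, ENNReal.ofReal ((C * k) ^ p) * ∑ j ∈ J, ENNReal.ofReal (|f j x| ^ p) ∂μ :=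
              lintegral_mono hpoint
          _ = ENNReal.ofReal ((C * k) ^ p) * ∫⁻ x, ∑ j ∈ J, ENNReal.ofReal (|f j x| ^ p) ∂μ :=
              lintegral_const_mul' _ _ ENNReal.ofReal_ne_top
          _ = ENNReal.ofReal ((C * k) ^ p) * ∑ j ∈ J, ∫⁻ x, ENNReal.ofReal (|f j x| ^ p) ∂μ := by
              rw [lintegral_finset_sum J (fun j _ => memlp_integrand_meas (hf j).1 hp0)]
          _ < ⊤ := ENNReal.mul_lt_top ENNReal.ofReal_lt_top
              (ENNReal.sum_lt_top.mpr fun j _ => (hf j).2)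
      · -- J empty: τ vanishes identically
        have hzero : ∀ x : I → ℝ, τ x = 0 := by
          intro x
          have := hbound x
          rw [Finset.not_nonempty_iff_eq_empty.mp hJ] at this
          simp only [Finset.sum_empty, mul_zero] at this
          exact abs_eq_zero.mp (le_antisymm this (abs_nonneg _))
        simp only [hzero]
        simp [Real.zero_rpow hpne]
    · -- I empty
      have hIempty : IsEmpty I := not_nonempty_iff.mp hI
      have hτ0 : τ (fun _ => 0) = 0 := tau_zero τ p hp H
      have hconst : ∀ x : Ω, (fun i => f i x) = (fun _ => (0:ℝ)) := by
        intro x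
        funext i
        exact absurd (⟨i⟩ : Nonempty I) hI
      refine ⟨?_, ?_⟩
      · simp only [hconst, hτ0]
        exact measurable_const
      · simp only [hconst, hτ0]
        simp [Real.zero_rpow hpne]
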